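/- With ι, π as above and ζ : K^{op} ⊗ H → H, k ⊗ h ↦ ε(k)h, γ : K^{op} → K^{op} ⊗ H, k ↦ k ⊗ 1, the identity (ι∘ζ) ∗ (γ∘π) = id holds in the convolution algebra End_k(K^{op} ⊗ H), i.e. Σ ι(ζ(x₁)) · γ(π(x₂)) = x for all x ∈ K^{op} ⊗ H. -/

import Mathlib

open TensorProduct LinearMap Coalgebra Module

noncomputable section
section AuxConv

variable {R : Type} [CommRing R]

section Conv
variable {C A : Type} [AddCommGroup C] [Module R C] [Coalgebra R C]
  [Ring A] [Algebra R A]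

/-- Convolution product on `C →ₗ A`. -/
def conv (f g : C →ₗ[R] A) : C →ₗ[R] A :=
  LinearMap.mul' R A ∘ₗ TensorProduct.map f g ∘ₗ Coalgebra.comul

lemma conv_repr (f g : C →ₗ[R] A) {c : C} {ι : Type*} (r : Coalgebra.Repr R c ι) :
    conv f g c = ∑ i ∈ r.index, f (r.left i) * g (r.right i) := by
  simp only [conv, LinearMap.comp_apply, ← r.eq, map_sum, TensorProduct.map_tmul,
    LinearMap.mul'_apply]

lemma sum_counit_smul_right {c : C} {ι : Type*} (r : Coalgebra.Repr R c ι) :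
    ∑ i ∈ r.index, counit (R := R) (r.left i) • r.right i = c := by
  have := Coalgebra.sum_counit_tmul_eq r
  apply_fun (TensorProduct.lid R C) at this
  simpa only [map_sum, TensorProduct.lid_tmul, one_smul] using this

lemma sum_counit_smul_left {c : C} {ι : Type*} (r : Coalgebra.Repr R c ι) :
    ∑ i ∈ r.index, counit (R := R) (r.right i) • r.left i = c := by
  have := Coalgebra.sum_tmul_counit_eq r
  apply_fun (TensorProduct.rid R C) at this
  simpa only [map_sum, TensorProduct.rid_tmul, one_smul] using this

/-- Unit of the convolution algebra. -/
def convUnit : C →ₗ[R] A := Algebra.linearMap R A ∘ₗ Coalgebra.counit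

lemma conv_unit_left (f : C →ₗ[R] A) : conv convUnit f = f := by
  ext c
  rw [conv_repr _ _ (ℛ R c)]
  simp only [convUnit, LinearMap.comp_apply, Algebra.linearMap_apply, ← Algebra.smul_def,
    ← map_smul]
  rw [← map_sum, sum_counit_smul_right]

lemma conv_unit_right (f : C →ₗ[R] A) : conv f convUnit = f := by
  ext c
  rw [conv_repr _ _ (ℛ R c)]
  simp only [convUnit, LinearMap.comp_apply, Algebra.linearMap_apply, ← Algebra.commutes,
    ← Algebra.smul_def, ← map_smul]
  rw [← map_sum, sum_counit_smul_left]

lemma conv_assoc (f g h : C →ₗ[R] A) : conv (conv f g) h = conv f (conv g h) := by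
  ext c
  have key := Coalgebra.sum_tmul_tmul_eq (ℛ R c) (fun i => ℛ R ((ℛ R c).left i))
    (fun i => ℛ R ((ℛ R c).right i))
  apply_fun (LinearMap.mul' R A ∘ₗ TensorProduct.map f (LinearMap.mul' R A ∘ₗ
    TensorProduct.map g h)) at key
  simp only [map_sum, LinearMap.comp_apply, TensorProduct.map_tmul,
    LinearMap.mul'_apply] at key
  rw [conv_repr _ _ (ℛ R c), conv_repr _ _ (ℛ R c)]
  calc ∑ i ∈ (ℛ R c).index, conv f g ((ℛ R c).left i) * h ((ℛ R c).right i)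
      = ∑ i ∈ (ℛ R c).index, ∑ j ∈ (ℛ R ((ℛ R c).left i)).index,
          f ((ℛ R ((ℛ R c).left i)).left j) * ((g ((ℛ R ((ℛ R c).left i)).right j)) *
            h ((ℛ R c).right i)) := by
        refine Finset.sum_congr rfl fun i _ => ?_
        rw [conv_repr _ _ (ℛ R ((ℛ R c).left i)), Finset.sum_mul]
        simp [mul_assoc]
    _ = ∑ i ∈ (ℛ R c).index, ∑ j ∈ (ℛ R ((ℛ R c).right i)).index,
          f ((ℛ R c).left i) * (g ((ℛ R ((ℛ R c).right i)).left j) *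
            h ((ℛ R ((ℛ R c).right i)).right j)) := key
    _ = ∑ i ∈ (ℛ R c).index, f ((ℛ R c).left i) * conv g h ((ℛ R c).right i) := by
        refine Finset.sum_congr rfl fun i _ => ?_
        rw [conv_repr _ _ (ℛ R ((ℛ R c).right i)), Finset.mul_sum]

end Conv

section Anti

variable {H : Type} [Ring H] [HopfAlgebra R H]

local notation "S" => HopfAlgebra.antipode (R := R) (A := H)

/-- Repr of a pure tensor in the tensor-product coalgebra. -/
def Coalgebra.Repr.tprod {A B : Type} [Ring A] [Ring B] [Bialgebra R A] [Bialgebra R B]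
    {a : A} {b : B} {ι κ : Type*} (ra : Coalgebra.Repr R a ι) (rb : Coalgebra.Repr R b κ) :
    Coalgebra.Repr R (a ⊗ₜ[R] b) (ι × κ) where
  index := ra.index ×ˢ rb.index
  left p := ra.left p.1 ⊗ₜ rb.left p.2
  right p := ra.right p.1 ⊗ₜ rb.right p.2
  eq := by
    have : Coalgebra.comul (R := R) (a ⊗ₜ[R] b) =
        (Algebra.TensorProduct.tensorTensorTensorComm R R R R A A B B).toLinearMap
          (Coalgebra.comul a ⊗ₜ[R] Coalgebra.comul b) := by
      rw [Bialgebra.TensorProduct.comul_eq_algHom_toLinearMap]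
      rfl
    rw [this, ← ra.eq, ← rb.eq, TensorProduct.sum_tmul]
    simp only [TensorProduct.tmul_sum, map_sum, Finset.sum_product]
    rfl

lemma antipode_one' : S (1 : H) = 1 := by
  have h1 : Coalgebra.comul (R := R) (1 : H) = (1 : H) ⊗ₜ[R] 1 := by
    rw [Bialgebra.comul_one]; rfl
  have := HopfAlgebra.mul_antipode_rTensor_comul_apply (R := R) (A := H) 1
  rw [h1] at this
  simpa using this

lemma antipode_mul_anti (a b : H) : S (a * b) = S b * S a := by
  -- convolution argument in `H ⊗ H →ₗ H`
  set F : H ⊗[R] H →ₗ[R] H :=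
    LinearMap.mul' R H ∘ₗ TensorProduct.map S S ∘ₗ (TensorProduct.comm R H H).toLinearMap with hF
  set G : H ⊗[R] H →ₗ[R] H := S ∘ₗ LinearMap.mul' R H with hG
  set m : H ⊗[R] H →ₗ[R] H := LinearMap.mul' R H with hm
  have hFm : conv F m = convUnit := by
    refine TensorProduct.ext' fun a b => ?_
    rw [conv_repr _ _ ((ℛ R a).tprod (ℛ R b))]
    simp only [Coalgebra.Repr.tprod, Finset.sum_product, hF, hm, LinearMap.comp_apply,
      LinearEquiv.coe_coe, TensorProduct.comm_tmul, TensorProduct.map_tmul,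
      LinearMap.mul'_apply]
    calc ∑ i ∈ (ℛ R a).index, ∑ j ∈ (ℛ R b).index,
          S ((ℛ R b).left j) * S ((ℛ R a).left i) * ((ℛ R a).right i * (ℛ R b).right j)
        = ∑ j ∈ (ℛ R b).index, S ((ℛ R b).left j) *
            (∑ i ∈ (ℛ R a).index, S ((ℛ R a).left i) * (ℛ R a).right i) * (ℛ R b).right j := by
          rw [Finset.sum_comm]
          refine Finset.sum_congr rfl fun j _ => ?_
          simp only [Finset.mul_sum, Finset.sum_mul]
          exact Finset.sum_congr rfl fun i _ => by simp [mul_assoc]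
      _ = Coalgebra.counit (R := R) a •
            ∑ j ∈ (ℛ R b).index, S ((ℛ R b).left j) * (ℛ R b).right j := by
          rw [HopfAlgebra.sum_antipode_mul_eq_smul (ℛ R a), Finset.smul_sum]
          refine Finset.sum_congr rfl fun j _ => ?_
          rw [mul_smul_comm, smul_mul_assoc, mul_one]
      _ = Coalgebra.counit (R := R) a • (Coalgebra.counit (R := R) b • (1 : H)) := by
          rw [HopfAlgebra.sum_antipode_mul_eq_smul (ℛ R b)]
      _ = convUnit (a ⊗ₜ[R] b) := by
          have hc : Coalgebra.counit (R := R) (a ⊗ₜ[R] b) =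
              Coalgebra.counit (R := R) a * Coalgebra.counit (R := R) b := by
              rw [TensorProduct.counit_tmul, smul_eq_mul, mul_comm]
          simp only [convUnit, LinearMap.comp_apply, Algebra.linearMap_apply, hc, map_mul,
            smul_smul, Algebra.smul_def, mul_one]
  have hmG : conv m G = convUnit := by
    refine TensorProduct.ext' fun a b => ?_
    have rab : ∑ p ∈ (ℛ R a).index ×ˢ (ℛ R b).index,
        ((ℛ R a).left p.1 * (ℛ R b).left p.2) ⊗ₜ[R] ((ℛ R a).right p.1 * (ℛ R b).right p.2)
        = Coalgebra.comul (R := R) (a * b) := by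
      rw [Bialgebra.comul_mul, ← (ℛ R a).eq, ← (ℛ R b).eq, Finset.sum_mul_sum]
      simp only [Finset.sum_product, Algebra.TensorProduct.tmul_mul_tmul]
    have key := HopfAlgebra.sum_mul_antipode_eq_smul
      (⟨(ℛ R a).index ×ˢ (ℛ R b).index,
        fun p => (ℛ R a).left p.1 * (ℛ R b).left p.2,
        fun p => (ℛ R a).right p.1 * (ℛ R b).right p.2, rab⟩ : Coalgebra.Repr R (a * b) ((H × H) × (H × H)))
    rw [conv_repr _ _ ((ℛ R a).tprod (ℛ R b))]
    simp only [Coalgebra.Repr.tprod, hm, hG, LinearMap.comp_apply, LinearMap.mul'_apply] at key ⊢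
    rw [key]
    have hc : Coalgebra.counit (R := R) (a ⊗ₜ[R] b) =
        Coalgebra.counit (R := R) a * Coalgebra.counit (R := R) b := by
          rw [TensorProduct.counit_tmul, smul_eq_mul, mul_comm]
    simp only [convUnit, LinearMap.comp_apply, Algebra.linearMap_apply, hc,
      Bialgebra.counit_mul, Algebra.smul_def, mul_one]
  have : F = G := by
    calc F = conv F convUnit := (conv_unit_right F).symm
      _ = conv F (conv m G) := by rw [hmG]
      _ = conv (conv F m) G := (conv_assoc F m G).symm
      _ = conv convUnit G := by rw [hFm]
      _ = G := conv_unit_left G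
  have := congr($this (a ⊗ₜ[R] b))
  simpa [hF, hG, hm] using this.symm

end Anti

end AuxConv

variable (k : Type) [Field k]

/-- Convolution product of two linear functionals on a coalgebra. -/
def fconv (C : Type) [AddCommGroup C] [Module k C] [Coalgebra k C]
    (f g : C →ₗ[k] k) : C →ₗ[k] k :=
  LinearMap.mul' k k ∘ₗ TensorProduct.map f g ∘ₗ Coalgebra.comul

/-- The comultiplication of the dual coalgebra of a finite-dimensional algebra. -/
def dcomul (K : Type) [Ring K] [Algebra k K] [Module.Finite k K] :
    Module.Dual k K →ₗ[k] Module.Dual k K ⊗[k] Module.Dual k K :=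
  (TensorProduct.dualDistribEquiv k K K).symm.toLinearMap ∘ₗ (LinearMap.mul' k K).dualMap

variable (K H : Type) [Ring K] [Ring H] [HopfAlgebra k K] [HopfAlgebra k H]
  [Module.Finite k K] [Module.Finite k H]

/-- The map `σ_r : H → K` induced by a pairing `σ : K* ⊗ H → k` (curried as `σ : K* → H*`),
via the canonical identification `K ≅ K**`. -/
def sigmaR (σ : Module.Dual k K →ₗ[k] Module.Dual k H) : H →ₗ[k] K :=
  (Module.evalEquiv k K).symm.toLinearMap ∘ₗ σ.flip

/-- The opposite multiplication of `K`, i.e. the multiplication of `K^{op}`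
(`k ⊗ k' ↦ k' * k`), on the underlying space `K`. -/
def opMul : K ⊗[k] K →ₗ[k] K :=
  LinearMap.mul' k K ∘ₗ (TensorProduct.comm k K K).toLinearMap

/-- The multiplication of the tensor product algebra `K^{op} ⊗ H`
(on the underlying space `K ⊗ H`). -/
def mulB : (K ⊗[k] H) ⊗[k] (K ⊗[k] H) →ₗ[k] K ⊗[k] H :=
  TensorProduct.map (opMul k K) (LinearMap.mul' k H)
    ∘ₗ (TensorProduct.tensorTensorTensorComm k K H K H).toLinearMap

/-- The unit of `K^{op} ⊗ H`. -/
def oneB : K ⊗[k] H := (1 : K) ⊗ₜ[k] (1 : H)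

/-- The comultiplication of the tensor product coalgebra `K^{op} ⊗ H`
(`K^{op}` has the same comultiplication as `K`). -/
def comulB : K ⊗[k] H →ₗ[k] (K ⊗[k] H) ⊗[k] (K ⊗[k] H) :=
  (TensorProduct.tensorTensorTensorComm k K K H H).toLinearMap
    ∘ₗ TensorProduct.map Coalgebra.comul Coalgebra.comul

/-- The counit of the coalgebra `K^{op} ⊗ H`. -/
def epsB : K ⊗[k] H →ₗ[k] k :=
  LinearMap.mul' k k ∘ₗ
    TensorProduct.map (Coalgebra.counit (R := k) (A := K)) (Coalgebra.counit (R := k) (A := H))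

/-- The coaction `ρ : H → (K^{op} ⊗ H) ⊗ H`, `h ↦ Σ (σ_r(S⁻¹(h₍₃₎)) ⊗ h₍₁₎) ⊗ h₍₂₎`. -/
def rhoH (σ : Module.Dual k K →ₗ[k] Module.Dual k H) (Sinv : H →ₗ[k] H) :
    H →ₗ[k] (K ⊗[k] H) ⊗[k] H :=
  (TensorProduct.assoc k K H H).symm.toLinearMap
    ∘ₗ TensorProduct.map (sigmaR k K H σ ∘ₗ Sinv) .id
    ∘ₗ (TensorProduct.comm k (H ⊗[k] H) H).toLinearMap
    ∘ₗ TensorProduct.map Coalgebra.comul .id ∘ₗ Coalgebra.comul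

/-- The right `K^{op} ⊗ H`-action on `K^{op}`:
`l ⊗ (κ ⊗ h) ↦ κ l σ_r(h)`, where the product is written in `K`
(i.e. the element `κ * l * σ_r(h)` of `K`). -/
def actK (σ : Module.Dual k K →ₗ[k] Module.Dual k H) :
    K ⊗[k] (K ⊗[k] H) →ₗ[k] K :=
  LinearMap.mul' k K
    ∘ₗ TensorProduct.map (LinearMap.mul' k K ∘ₗ (TensorProduct.comm k K K).toLinearMap) .id
    ∘ₗ (TensorProduct.assoc k K K K).symm.toLinearMap
    ∘ₗ TensorProduct.map .id (TensorProduct.map .id (sigmaR k K H σ))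

/-- The map `ι : H → K^{op} ⊗ H`, `h ↦ Σ σ_r(S⁻¹(h₍₂₎)) ⊗ h₍₁₎`. -/
def iotaH (σ : Module.Dual k K →ₗ[k] Module.Dual k H) (Sinv : H →ₗ[k] H) :
    H →ₗ[k] K ⊗[k] H :=
  TensorProduct.map (sigmaR k K H σ ∘ₗ Sinv) .id
    ∘ₗ (TensorProduct.comm k H H).toLinearMap ∘ₗ Coalgebra.comul

/-- The map `π : K^{op} ⊗ H → K^{op}`, `κ ⊗ h ↦ κ σ_r(h)` (product written in `K`). -/
def piB (σ : Module.Dual k K →ₗ[k] Module.Dual k H) : K ⊗[k] H →ₗ[k] K :=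
  LinearMap.mul' k K ∘ₗ TensorProduct.map .id (sigmaR k K H σ)

/-- The map `ζ : K^{op} ⊗ H → H`, `κ ⊗ h ↦ ε(κ) h`. -/
def zetaB : K ⊗[k] H →ₗ[k] H :=
  (TensorProduct.lid k H).toLinearMap
    ∘ₗ TensorProduct.map (Coalgebra.counit (R := k) (A := K)) .id

/-- The map `γ : K^{op} → K^{op} ⊗ H`, `κ ↦ κ ⊗ 1`. -/
def gammaB : K →ₗ[k] K ⊗[k] H :=
  (TensorProduct.mk k K H).flip (1 : H)


section AuxMain

variable {k K H} in
lemma sum_mul_Sinv (Sinv : H →ₗ[k] H)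
    (hSinv₁ : Sinv ∘ₗ HopfAlgebra.antipode (R := k) = LinearMap.id)
    (hSinv₂ : HopfAlgebra.antipode (R := k) ∘ₗ Sinv = LinearMap.id)
    {y : H} {ι : Type*} (r : Coalgebra.Repr k y ι) :
    ∑ i ∈ r.index, r.right i * Sinv (r.left i) = Coalgebra.counit (R := k) y • 1 := by
  have hinj : Function.Injective (HopfAlgebra.antipode (R := k) (A := H)) := by
    intro x y hxy
    have hx := LinearMap.congr_fun hSinv₁ x
    have hy := LinearMap.congr_fun hSinv₁ y
    simp only [LinearMap.comp_apply, LinearMap.id_apply] at hx hy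
    rw [← hx, ← hy, hxy]
  apply hinj
  rw [map_sum, map_smul, antipode_one']
  calc ∑ i ∈ r.index, HopfAlgebra.antipode (R := k) (r.right i * Sinv (r.left i))
      = ∑ i ∈ r.index, r.left i * HopfAlgebra.antipode (R := k) (r.right i) := by
        refine Finset.sum_congr rfl fun i _ => ?_
        rw [antipode_mul_anti]
        have := LinearMap.congr_fun hSinv₂ (r.left i)
        simp only [LinearMap.comp_apply, LinearMap.id_apply] at this
        rw [this]
    _ = Coalgebra.counit (R := k) y • 1 := HopfAlgebra.sum_mul_antipode_eq_smul r

variable {k K H} in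
lemma eval_sigmaR (σ : Module.Dual k K →ₗ[k] Module.Dual k H) (h : H) :
    Module.Dual.eval k K (sigmaR k K H σ h) = σ.flip h := by
  have : Module.Dual.eval k K (sigmaR k K H σ h)
      = Module.evalEquiv k K (sigmaR k K H σ h) := rfl
  rw [this, sigmaR, LinearMap.comp_apply, LinearEquiv.coe_coe,
    (Module.evalEquiv k K).apply_symm_apply]

lemma dcomul_pair (f : Module.Dual k K) (x y : K) :
    LinearMap.mul' k k (TensorProduct.map (Module.Dual.eval k K x) (Module.Dual.eval k K y)
      (dcomul k K f)) = f (x * y) := by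
  have h2 : ∀ t : Module.Dual k K ⊗[k] Module.Dual k K,
      LinearMap.mul' k k (TensorProduct.map (Module.Dual.eval k K x)
        (Module.Dual.eval k K y) t) = TensorProduct.dualDistrib k K K t (x ⊗ₜ[k] y) := by
    intro t
    induction t using TensorProduct.induction_on with
    | zero => simp
    | tmul g h => simp
    | add u v hu hv => simp [hu, hv]
  rw [dcomul, LinearMap.comp_apply, LinearEquiv.coe_coe, h2]
  have h3 : TensorProduct.dualDistrib k K K
      ((TensorProduct.dualDistribEquiv k K K).symm ((LinearMap.mul' k K).dualMap f))
      = (LinearMap.mul' k K).dualMap f :=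
    (TensorProduct.dualDistribEquiv k K K).apply_symm_apply _
  rw [h3, LinearMap.dualMap_apply, LinearMap.mul'_apply]

variable {k K H} in
lemma sigmaR_one (σ : Module.Dual k K →ₗ[k] Module.Dual k H)
    (pair_one_right : ∀ f : Module.Dual k K, σ f 1 = f 1) :
    sigmaR k K H σ 1 = 1 := by
  apply (Module.evalEquiv k K).injective
  ext f
  have : Module.evalEquiv k K (sigmaR k K H σ 1) = σ.flip 1 := eval_sigmaR σ 1
  rw [this]
  simp [pair_one_right, Module.evalEquiv_apply]

variable {k K H} in
lemma sigmaR_mul (σ : Module.Dual k K →ₗ[k] Module.Dual k H)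
    (pair_mul_right : ∀ (f : Module.Dual k K) (h h' : H),
      σ f (h * h') =
        (LinearMap.mul' k k ∘ₗ
          TensorProduct.map (LinearMap.applyₗ h ∘ₗ σ) (LinearMap.applyₗ h' ∘ₗ σ))
          (dcomul k K f)) (h h' : H) :
    sigmaR k K H σ (h * h') = sigmaR k K H σ h * sigmaR k K H σ h' := by
  apply (Module.evalEquiv k K).injective
  ext f
  have e0 : Module.evalEquiv k K (sigmaR k K H σ (h * h')) = σ.flip (h * h') :=
    eval_sigmaR σ _
  rw [e0]
  have e1 : LinearMap.applyₗ h ∘ₗ σ = Module.Dual.eval k K (sigmaR k K H σ h) := by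
    ext g
    rw [eval_sigmaR σ h]
    rfl
  have e2 : LinearMap.applyₗ h' ∘ₗ σ = Module.Dual.eval k K (sigmaR k K H σ h') := by
    ext g
    rw [eval_sigmaR σ h']
    rfl
  have := pair_mul_right f h h'
  rw [e1, e2] at this
  simp only [LinearMap.flip_apply, LinearMap.comp_apply] at this ⊢
  rw [this, dcomul_pair]
  simp [Module.evalEquiv_apply]

end AuxMain

/-- With `ι(h) = Σ σ_r(S⁻¹(h₍₂₎)) ⊗ h₍₁₎`, `π(κ ⊗ h) = κ σ_r(h)`,
`ζ(κ ⊗ h) = ε(κ) h` and `γ(κ) = κ ⊗ 1`, the identity `(ι∘ζ) ∗ (γ∘π) = id` holds in the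
convolution algebra `End_k(K^{op} ⊗ H)`, i.e.
`Σ ι(ζ(x₍₁₎)) · γ(π(x₍₂₎)) = x` for all `x ∈ K^{op} ⊗ H`. -/
theorem conv_iota_zeta_gamma_pi_eq_id (σ : Module.Dual k K →ₗ[k] Module.Dual k H)
    (pair_mul_left : ∀ f g : Module.Dual k K, σ (fconv k K f g) = fconv k H (σ f) (σ g))
    (pair_mul_right : ∀ (f : Module.Dual k K) (h h' : H),
      σ f (h * h') =
        (LinearMap.mul' k k ∘ₗ
          TensorProduct.map (LinearMap.applyₗ h ∘ₗ σ) (LinearMap.applyₗ h' ∘ₗ σ))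
          (dcomul k K f))
    (pair_one_left : σ Coalgebra.counit = Coalgebra.counit)
    (pair_one_right : ∀ f : Module.Dual k K, σ f 1 = f 1)
    (Sinv : H →ₗ[k] H)
    (hSinv₁ : Sinv ∘ₗ HopfAlgebra.antipode (R := k) = LinearMap.id)
    (hSinv₂ : HopfAlgebra.antipode (R := k) ∘ₗ Sinv = LinearMap.id) :
    mulB k K H
        ∘ₗ TensorProduct.map (iotaH k K H σ Sinv ∘ₗ zetaB k K H) (gammaB k K H ∘ₗ piB k K H σ)
        ∘ₗ comulB k K H = LinearMap.id := by
  refine TensorProduct.ext' fun κ h => ?_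
  simp only [LinearMap.comp_apply, LinearMap.id_coe, id_eq]
  have hA : comulB k K H (κ ⊗ₜ[k] h) = ∑ i ∈ (ℛ k κ).index, ∑ j ∈ (ℛ k h).index,
      ((ℛ k κ).left i ⊗ₜ[k] (ℛ k h).left j) ⊗ₜ[k] ((ℛ k κ).right i ⊗ₜ[k] (ℛ k h).right j) := by
    rw [comulB, LinearMap.comp_apply, TensorProduct.map_tmul, ← (ℛ k κ).eq, ← (ℛ k h).eq,
      TensorProduct.sum_tmul]
    simp only [TensorProduct.tmul_sum, map_sum, LinearEquiv.coe_coe,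
      TensorProduct.tensorTensorTensorComm_tmul]
  rw [hA]
  simp only [map_sum]
  have hι : ∀ (y : H), iotaH k K H σ Sinv y = ∑ l ∈ (ℛ k y).index,
      sigmaR k K H σ (Sinv ((ℛ k y).right l)) ⊗ₜ[k] (ℛ k y).left l := by
    intro y
    rw [iotaH]
    simp only [LinearMap.comp_apply, ← (ℛ k y).eq, map_sum, LinearEquiv.coe_coe,
      TensorProduct.comm_tmul, TensorProduct.map_tmul, LinearMap.id_coe, id_eq]
  have hterm : ∀ i j, mulB k K H
      (TensorProduct.map (iotaH k K H σ Sinv ∘ₗ zetaB k K H) (gammaB k K H ∘ₗ piB k K H σ)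
        (((ℛ k κ).left i ⊗ₜ[k] (ℛ k h).left j) ⊗ₜ[k] ((ℛ k κ).right i ⊗ₜ[k] (ℛ k h).right j)))
      = Coalgebra.counit (R := k) ((ℛ k κ).left i) •
          ∑ l ∈ (ℛ k ((ℛ k h).left j)).index,
            (((ℛ k κ).right i *
              (sigmaR k K H σ ((ℛ k h).right j) *
                sigmaR k K H σ (Sinv ((ℛ k ((ℛ k h).left j)).right l)))) ⊗ₜ[k]
              (ℛ k ((ℛ k h).left j)).left l) := by
    intro i j
    rw [TensorProduct.map_tmul]
    have hζ : zetaB k K H ((ℛ k κ).left i ⊗ₜ[k] (ℛ k h).left j)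
        = Coalgebra.counit (R := k) ((ℛ k κ).left i) • (ℛ k h).left j := by
      rw [zetaB]
      simp
    have hπ : piB k K H σ ((ℛ k κ).right i ⊗ₜ[k] (ℛ k h).right j)
        = (ℛ k κ).right i * sigmaR k K H σ ((ℛ k h).right j) := by
      rw [piB]
      simp
    rw [LinearMap.comp_apply, LinearMap.comp_apply, hζ, hπ, map_smul, hι,
      ← TensorProduct.smul_tmul', map_smul]
    rw [gammaB]
    simp only [LinearMap.flip_apply, TensorProduct.mk_apply, TensorProduct.sum_tmul, map_sum,
      mulB, LinearMap.comp_apply, LinearEquiv.coe_coe,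
      TensorProduct.tensorTensorTensorComm_tmul, TensorProduct.map_tmul, LinearMap.id_coe,
      id_eq, LinearMap.mul'_apply, opMul, TensorProduct.comm_tmul, mul_one]
    refine congrArg _ (Finset.sum_congr rfl fun l _ => ?_)
    rw [mul_assoc]
  simp only [hterm]
  rw [Finset.sum_comm]
  have hsum_i : ∀ (X : K) (u : H), ∑ i ∈ (ℛ k κ).index,
      Coalgebra.counit (R := k) ((ℛ k κ).left i) • (((ℛ k κ).right i * X) ⊗ₜ[k] u)
      = (κ * X) ⊗ₜ[k] u := by
    intro X u
    have hΦ : ∀ c : K, ((TensorProduct.mk k K H).flip u ∘ₗ LinearMap.mulRight k X) c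
        = (c * X) ⊗ₜ[k] u := fun c => rfl
    calc ∑ i ∈ (ℛ k κ).index,
          Coalgebra.counit (R := k) ((ℛ k κ).left i) • (((ℛ k κ).right i * X) ⊗ₜ[k] u)
        = ∑ i ∈ (ℛ k κ).index, ((TensorProduct.mk k K H).flip u ∘ₗ LinearMap.mulRight k X)
            (Coalgebra.counit (R := k) ((ℛ k κ).left i) • (ℛ k κ).right i) := by
          refine Finset.sum_congr rfl fun i _ => ?_
          rw [map_smul, hΦ]
      _ = ((TensorProduct.mk k K H).flip u ∘ₗ LinearMap.mulRight k X)
            (∑ i ∈ (ℛ k κ).index,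
              Coalgebra.counit (R := k) ((ℛ k κ).left i) • (ℛ k κ).right i) := by
          rw [map_sum]
      _ = (κ * X) ⊗ₜ[k] u := by rw [sum_counit_smul_right (ℛ k κ), hΦ]
  have hkey : ∑ j ∈ (ℛ k h).index, ∑ l ∈ (ℛ k ((ℛ k h).left j)).index,
      (ℛ k ((ℛ k h).left j)).left l ⊗ₜ[k]
        ((ℛ k h).right j * Sinv ((ℛ k ((ℛ k h).left j)).right l))
      = h ⊗ₜ[k] (1 : H) := by
    have key := Coalgebra.sum_tmul_tmul_eq (ℛ k h) (fun j => ℛ k ((ℛ k h).left j))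
      (fun j => ℛ k ((ℛ k h).right j))
    apply_fun (TensorProduct.map LinearMap.id
      (LinearMap.mul' k H ∘ₗ (TensorProduct.comm k H H).toLinearMap ∘ₗ
        TensorProduct.map Sinv LinearMap.id)) at key
    simp only [map_sum, TensorProduct.map_tmul, LinearMap.comp_apply, LinearMap.id_coe, id_eq,
      LinearEquiv.coe_coe, TensorProduct.comm_tmul, LinearMap.mul'_apply] at key
    rw [key]
    calc ∑ j ∈ (ℛ k h).index, ∑ m ∈ (ℛ k ((ℛ k h).right j)).index,
          (ℛ k h).left j ⊗ₜ[k] ((ℛ k ((ℛ k h).right j)).right m *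
            Sinv ((ℛ k ((ℛ k h).right j)).left m))
        = ∑ j ∈ (ℛ k h).index, (Coalgebra.counit (R := k) ((ℛ k h).right j) •
            (ℛ k h).left j) ⊗ₜ[k] (1 : H) := by
          refine Finset.sum_congr rfl fun j _ => ?_
          rw [← TensorProduct.tmul_sum,
            sum_mul_Sinv Sinv hSinv₁ hSinv₂ (ℛ k ((ℛ k h).right j)),
            TensorProduct.tmul_smul, TensorProduct.smul_tmul']
      _ = h ⊗ₜ[k] 1 := by rw [← TensorProduct.sum_tmul, sum_counit_smul_left (ℛ k h)]
  calc ∑ j ∈ (ℛ k h).index, ∑ i ∈ (ℛ k κ).index,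
        Coalgebra.counit (R := k) ((ℛ k κ).left i) •
          ∑ l ∈ (ℛ k ((ℛ k h).left j)).index,
            (((ℛ k κ).right i *
              (sigmaR k K H σ ((ℛ k h).right j) *
                sigmaR k K H σ (Sinv ((ℛ k ((ℛ k h).left j)).right l)))) ⊗ₜ[k]
              (ℛ k ((ℛ k h).left j)).left l)
      = ∑ j ∈ (ℛ k h).index, ∑ l ∈ (ℛ k ((ℛ k h).left j)).index, ∑ i ∈ (ℛ k κ).index,
          Coalgebra.counit (R := k) ((ℛ k κ).left i) •
            (((ℛ k κ).right i *
              (sigmaR k K H σ ((ℛ k h).right j) *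
                sigmaR k K H σ (Sinv ((ℛ k ((ℛ k h).left j)).right l)))) ⊗ₜ[k]
              (ℛ k ((ℛ k h).left j)).left l) := by
        refine Finset.sum_congr rfl fun j _ => ?_
        rw [← Finset.sum_comm]
        exact Finset.sum_congr rfl fun i _ => (Finset.smul_sum)
    _ = ∑ j ∈ (ℛ k h).index, ∑ l ∈ (ℛ k ((ℛ k h).left j)).index,
          (κ * (sigmaR k K H σ ((ℛ k h).right j) *
            sigmaR k K H σ (Sinv ((ℛ k ((ℛ k h).left j)).right l)))) ⊗ₜ[k]
            (ℛ k ((ℛ k h).left j)).left l :=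
        Finset.sum_congr rfl fun j _ => Finset.sum_congr rfl fun l _ => hsum_i _ _
    _ = ∑ j ∈ (ℛ k h).index, ∑ l ∈ (ℛ k ((ℛ k h).left j)).index,
          (TensorProduct.map (LinearMap.mulLeft k κ ∘ₗ sigmaR k K H σ) LinearMap.id ∘ₗ
            (TensorProduct.comm k H H).toLinearMap)
            ((ℛ k ((ℛ k h).left j)).left l ⊗ₜ[k]
              ((ℛ k h).right j * Sinv ((ℛ k ((ℛ k h).left j)).right l))) := by
        refine Finset.sum_congr rfl fun j _ => Finset.sum_congr rfl fun l _ => ?_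
        simp only [LinearMap.comp_apply, LinearEquiv.coe_coe, TensorProduct.comm_tmul,
          TensorProduct.map_tmul, LinearMap.id_coe, id_eq, LinearMap.mulLeft_apply]
        rw [sigmaR_mul σ pair_mul_right]
    _ = (TensorProduct.map (LinearMap.mulLeft k κ ∘ₗ sigmaR k K H σ) LinearMap.id ∘ₗ
          (TensorProduct.comm k H H).toLinearMap)
          (∑ j ∈ (ℛ k h).index, ∑ l ∈ (ℛ k ((ℛ k h).left j)).index,
            (ℛ k ((ℛ k h).left j)).left l ⊗ₜ[k]
              ((ℛ k h).right j * Sinv ((ℛ k ((ℛ k h).left j)).right l))) := by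
        simp only [map_sum]
    _ = κ ⊗ₜ[k] h := by
        rw [hkey]
        simp only [LinearMap.comp_apply, LinearEquiv.coe_coe, TensorProduct.comm_tmul,
          TensorProduct.map_tmul, LinearMap.id_coe, id_eq, LinearMap.mulLeft_apply,
          sigmaR_one σ pair_one_right, mul_one]
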